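/- Let X be a discrete-time stochastic process and c a measurable constraint function. Then the synchronous temporal robustness ω ↦ η^c(X(·,ω)) is a measurable function from Ω to the extended integers, i.e., η^c(X) is a random variable. -/

import Mathlib

open scoped Classical

noncomputable section

def shift {α : Type*} (x : ℤ → α) (κ : ℤ) : ℤ → α := fun t => x (t + κ)

def ashift {n : ℕ} (x : ℤ → Fin n → ℝ) (κ : Fin n → ℤ) : ℤ → Fin n → ℝ :=
  fun t i => x (t + κ i) i

def beta {n : ℕ} (c : (Fin n → ℝ) → ℤ → ℝ) (x : ℤ → Fin n → ℝ) : ℤ :=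
  if ∀ t : ℤ, 0 ≤ c (x t) t then 1 else -1

def absE (a : EReal) : EReal := max a (-a)

def eta {n : ℕ} (c : (Fin n → ℝ) → ℤ → ℝ) (x : ℤ → Fin n → ℝ) : EReal :=
  ((beta c x : ℝ) : EReal) * sSup ((fun τ : ℕ => ((τ : ℝ) : EReal)) ''
    {τ : ℕ | ∀ κ : ℤ, |κ| ≤ (τ : ℤ) → beta c (shift x κ) = beta c x})

def theta {n : ℕ} (c : (Fin n → ℝ) → ℤ → ℝ) (x : ℤ → Fin n → ℝ) : EReal :=
  ((beta c x : ℝ) : EReal) * sSup ((fun τ : ℕ => ((τ : ℝ) : EReal)) ''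
    {τ : ℕ | ∀ κ : Fin n → ℤ, (∀ i, |κ i| ≤ (τ : ℤ)) → beta c (ashift x κ) = beta c x})

lemma sSup_image_eq_aux6 (S : Set ℕ) (h0 : 0 ∈ S) :
    sSup ((fun τ : ℕ => ((τ : ℝ) : EReal)) '' S)
      = ⨆ τ : ℕ, (if τ ∈ S then ((τ : ℝ) : EReal) else 0) := by
  rw [sSup_image]
  apply le_antisymm
  · exact iSup₂_le fun τ hτ => le_iSup_of_le τ (by simp [hτ])
  · refine iSup_le fun τ => ?_
    by_cases h : τ ∈ S
    · simpa [h] using le_iSup₂ (f := fun (a : ℕ) (_ : a ∈ S) => ((a:ℝ):EReal)) τ h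
    · simp only [h, if_false]
      exact le_iSup₂_of_le 0 h0 (by simp)

lemma measurable_betaX_aux6 {n : ℕ} {Ω : Type*} [MeasurableSpace Ω]
    (X : ℤ → Ω → Fin n → ℝ) (c : (Fin n → ℝ) → ℤ → ℝ)
    (hX : ∀ t : ℤ, Measurable (X t)) (hc : ∀ t : ℤ, Measurable (fun z => c z t)) (κ : ℤ) :
    Measurable (fun ω => beta c (shift (fun t => X t ω) κ)) := by
  have h : (fun ω => beta c (shift (fun t => X t ω) κ))
      = fun ω => if ω ∈ ⋂ t : ℤ, {ω | 0 ≤ c (X (t + κ) ω) t} then (1:ℤ) else -1 := by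
    funext ω; simp [beta, shift, Set.mem_iInter]; exact if_congr Iff.rfl rfl rfl
  rw [h]
  exact Measurable.ite (MeasurableSet.iInter fun t =>
    measurableSet_le measurable_const ((hc t).comp (hX (t+κ)))) measurable_const measurable_const

/-- η^c(X) is a random variable. -/
theorem stmt6 {n : ℕ} {Ω : Type*} [MeasurableSpace Ω]
    (X : ℤ → Ω → Fin n → ℝ) (c : (Fin n → ℝ) → ℤ → ℝ)
    (hX : ∀ t : ℤ, Measurable (X t)) (hc : ∀ t : ℤ, Measurable (fun z => c z t)) :
    Measurable (fun ω => eta c (fun t => X t ω)) := by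
  have hb : ∀ κ : ℤ, Measurable (fun ω => beta c (shift (fun t => X t ω) κ)) :=
    measurable_betaX_aux6 X c hX hc
  have hshift0 : ∀ ω : Ω, shift (fun t => X t ω) 0 = fun t => X t ω := by
    intro ω; funext t; simp [shift]
  have hb0 : Measurable (fun ω => beta c (fun t => X t ω)) := by
    have h := hb 0
    simpa only [hshift0] using h
  -- the sets P τ
  have hP : ∀ τ : ℕ, MeasurableSet {ω | ∀ κ : ℤ, |κ| ≤ (τ:ℤ) →
      beta c (shift (fun t => X t ω) κ) = beta c (fun t => X t ω)} := by
    intro τ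
    have h : {ω | ∀ κ : ℤ, |κ| ≤ (τ:ℤ) →
        beta c (shift (fun t => X t ω) κ) = beta c (fun t => X t ω)}
        = ⋂ κ : ℤ, {ω | |κ| ≤ (τ:ℤ) →
            beta c (shift (fun t => X t ω) κ) = beta c (fun t => X t ω)} := by
      ext ω; simp [Set.mem_iInter]
    rw [h]
    refine MeasurableSet.iInter fun κ => ?_
    by_cases hκ : |κ| ≤ (τ:ℤ)
    · simp only [hκ, true_implies]
      exact measurableSet_eq_fun (hb κ) hb0
    · simp [hκ]
  -- the supremum function
  set F : Ω → EReal := fun ω => ⨆ τ : ℕ,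
    (if ω ∈ {ω | ∀ κ : ℤ, |κ| ≤ (τ:ℤ) →
        beta c (shift (fun t => X t ω) κ) = beta c (fun t => X t ω)}
      then ((τ:ℝ):EReal) else 0) with hF
  have hFm : Measurable F := by
    refine Measurable.iSup fun τ => ?_
    exact Measurable.ite (hP τ) measurable_const measurable_const
  -- rewrite eta
  have key : (fun ω => eta c (fun t => X t ω))
      = fun ω => if ω ∈ ⋂ t : ℤ, {ω | 0 ≤ c (X t ω) t} then F ω else -(F ω) := by
    funext ω
    have h0mem : (0:ℕ) ∈ {τ : ℕ | ∀ κ : ℤ, |κ| ≤ (τ:ℤ) →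
        beta c (shift (fun t => X t ω) κ) = beta c (fun t => X t ω)} := by
      intro κ hκ
      have hκ0 : |κ| ≤ 0 := by exact_mod_cast hκ
      rw [abs_nonpos_iff.mp hκ0, hshift0 ω]
    rw [eta, sSup_image_eq_aux6 _ h0mem]
    by_cases hp : ∀ t : ℤ, 0 ≤ c (X t ω) t
    · have hβ : beta c (fun t => X t ω) = 1 := if_pos hp
      have hmem : ω ∈ ⋂ t : ℤ, {ω | 0 ≤ c (X t ω) t} := by
        simp only [Set.mem_iInter, Set.mem_setOf_eq]; exact hp
      have hco : ((beta c (fun t => X t ω) : ℝ) : EReal) = 1 := by rw [hβ]; norm_num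
      rw [if_pos hmem, hco, one_mul]
      rfl
    · have hβ : beta c (fun t => X t ω) = -1 := if_neg hp
      have hmem : ω ∉ ⋂ t : ℤ, {ω | 0 ≤ c (X t ω) t} := by
        simp only [Set.mem_iInter, Set.mem_setOf_eq]
        exact hp
      have hco : ((beta c (fun t => X t ω) : ℝ) : EReal) = -1 := by rw [hβ]; norm_num
      rw [if_neg hmem, hco, neg_one_mul]
      rfl
  rw [key]
  exact Measurable.ite (MeasurableSet.iInter fun t =>
    measurableSet_le measurable_const ((hc t).comp (hX t))) hFm hFm.neg
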